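/- The Davenport constant satisfies D(G_0) ≤ max{2, (|G_0^+| − rk⟨G_0⟩) · D^elm(G_0)}, where D^elm(G_0) is the supremum of lengths of elementary atoms. -/

import Mathlib

/-- A zero-sum sequence over `G₀ ⊆ ℤ^r`: a finite multiset of elements of `G₀` summing to `0`. -/
def IsZeroSumSeq {r : ℕ} (G₀ : Set (Fin r → ℤ)) (S : Multiset (Fin r → ℤ)) : Prop :=
  (∀ g ∈ S, g ∈ G₀) ∧ S.sum = 0

/-- An atom (minimal zero-sum sequence) over `G₀`: a nonempty zero-sum sequence with no
proper nonempty zero-sum subsequence. -/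
def IsAtomSeq {r : ℕ} (G₀ : Set (Fin r → ℤ)) (S : Multiset (Fin r → ℤ)) : Prop :=
  IsZeroSumSeq G₀ S ∧ S ≠ 0 ∧
    ∀ T : Multiset (Fin r → ℤ), T ≤ S → T ≠ 0 → T.sum = 0 → T = S

/-- The signed support `supp⁺(S) = {g : v_g(S) - v_{-g}(S) ≠ 0}`. -/
def signedSupp {r : ℕ} (S : Multiset (Fin r → ℤ)) : Set (Fin r → ℤ) :=
  {g | S.count g ≠ S.count (-g)}

/-- An elementary zero-sum sequence over `G₀`: one whose signed support is nonempty and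
minimal among nonempty signed supports of zero-sum sequences over `G₀`. -/
def IsElemZeroSumSeq {r : ℕ} (G₀ : Set (Fin r → ℤ)) (S : Multiset (Fin r → ℤ)) : Prop :=
  IsZeroSumSeq G₀ S ∧ signedSupp S ≠ ∅ ∧
    ∀ T : Multiset (Fin r → ℤ), IsZeroSumSeq G₀ T → signedSupp T ≠ ∅ →
      signedSupp T ⊆ signedSupp S → signedSupp T = signedSupp S

/-- An elementary atom over `G₀`. -/
def IsElemAtom {r : ℕ} (G₀ : Set (Fin r → ℤ)) (S : Multiset (Fin r → ℤ)) : Prop :=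
  IsAtomSeq G₀ S ∧ IsElemZeroSumSeq G₀ S

/-- The Davenport constant of `G₀`: the supremum (in `ℕ∞`) of the lengths of atoms
(minimal zero-sum sequences) over `G₀`. -/
noncomputable def Davenport {r : ℕ} (G₀ : Set (Fin r → ℤ)) : ℕ∞ :=
  ⨆ U ∈ {U : Multiset (Fin r → ℤ) | IsAtomSeq G₀ U}, (Multiset.card U : ℕ∞)

/-- The elementary Davenport constant of `G₀`: the supremum (in `ℕ∞`) of the lengths of
elementary atoms over `G₀`. -/
noncomputable def DavenportElem {r : ℕ} (G₀ : Set (Fin r → ℤ)) : ℕ∞ :=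
  ⨆ U ∈ {U : Multiset (Fin r → ℤ) | IsElemAtom G₀ U}, (Multiset.card U : ℕ∞)

namespace Stmt4Aux

variable {r : ℕ}

/-- rational cast of an integer vector -/
def ratc (g : Fin r → ℤ) : Fin r → ℚ := fun i => (g i : ℚ)

lemma ratc_zero : ratc (0 : Fin r → ℤ) = 0 := by funext i; simp [ratc]

lemma ratc_neg (g : Fin r → ℤ) : ratc (-g) = - ratc g := by funext i; simp [ratc]

lemma ratc_add (g h : Fin r → ℤ) : ratc (g + h) = ratc g + ratc h := by
  funext i; simp [ratc]

lemma ratc_inj : Function.Injective (ratc (r := r)) := by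
  intro a b hab
  funext i
  have := congrFun hab i
  simpa [ratc] using this

/-- ratc as an AddMonoidHom -/
def ratcHom : (Fin r → ℤ) →+ (Fin r → ℚ) :=
  { toFun := ratc, map_zero' := ratc_zero, map_add' := ratc_add }

@[simp] lemma ratcHom_apply (g : Fin r → ℤ) : ratcHom g = ratc g := rfl

/-- The setup of an admissible partition. -/
structure Setup (G₀ Pp Pm : Finset (Fin r → ℤ)) : Prop where
  iff : ∀ x : Fin r → ℤ, (x ∈ Pp ∨ x ∈ Pm) ↔ (x ∈ G₀ ∧ x ≠ 0)
  disj : Disjoint Pp Pm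
  hp : ∀ g ∈ Pp, -g ∉ Pp
  hm : ∀ g ∈ Pm, -g ∉ Pm
  hmax : ∀ g ∈ Pm, -g ∈ Pp

namespace Setup

variable {G₀ Pp Pm : Finset (Fin r → ℤ)} (h : Setup G₀ Pp Pm)
include h

lemma Pp_subset : ∀ a ∈ Pp, a ∈ G₀ := fun a ha => ((h.iff a).mp (Or.inl ha)).1
lemma Pm_subset : ∀ a ∈ Pm, a ∈ G₀ := fun a ha => ((h.iff a).mp (Or.inr ha)).1
lemma Pp_ne_zero : ∀ a ∈ Pp, a ≠ 0 := fun a ha => ((h.iff a).mp (Or.inl ha)).2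
lemma Pm_ne_zero : ∀ a ∈ Pm, a ≠ 0 := fun a ha => ((h.iff a).mp (Or.inr ha)).2
lemma cases_mem : ∀ a ∈ G₀, a = 0 ∨ a ∈ Pp ∨ a ∈ Pm := by
  intro a ha
  by_cases h0 : a = 0
  · exact Or.inl h0
  · exact Or.inr ((h.iff a).mpr ⟨ha, h0⟩)

/-- if `b ∈ Pp` then `-b ∈ G₀` forces `-b ∈ Pm` -/
lemma neg_mem_Pm {b : Fin r → ℤ} (hb : b ∈ Pp) (hnb : -b ∈ G₀) : -b ∈ Pm := by
  rcases h.cases_mem _ hnb with h0 | hP | hM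
  · exact absurd (by simpa using congrArg Neg.neg h0) (h.Pp_ne_zero b hb)
  · exact absurd hP (h.hp b hb)
  · exact hM

end Setup

section Vec

variable {G₀ Pp Pm : Finset (Fin r → ℤ)}

/-- The linear map `ℚ^{Pp} → ℚ^r`. -/
noncomputable def Mmap (Pp : Finset (Fin r → ℤ)) : (↥Pp → ℚ) →ₗ[ℚ] (Fin r → ℚ) :=
  Fintype.linearCombination ℚ (fun i : ↥Pp => ratc (i : Fin r → ℤ))

lemma Mmap_apply (v : ↥Pp → ℚ) : Mmap Pp v = ∑ i : ↥Pp, v i • ratc (i : Fin r → ℤ) := by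
  simp [Mmap, Fintype.linearCombination_apply]

/-- The vector associated to a multiset. -/
def vec (Pp : Finset (Fin r → ℤ)) (S : Multiset (Fin r → ℤ)) : ↥Pp → ℚ :=
  fun i => (S.count (i : Fin r → ℤ) : ℚ) - (S.count (-(i : Fin r → ℤ)) : ℚ)

/-- support of a vector -/
def suppV (v : ↥Pp → ℚ) : Finset ↥Pp := Finset.univ.filter (fun i => v i ≠ 0)

lemma mem_suppV {v : ↥Pp → ℚ} {i : ↥Pp} : i ∈ suppV v ↔ v i ≠ 0 := by
  simp [suppV]

lemma suppV_eq_empty {v : ↥Pp → ℚ} : suppV v = ∅ ↔ v = 0 := by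
  constructor
  · intro hv; funext i
    by_contra hi
    have : i ∈ suppV v := mem_suppV.mpr hi
    simp [hv] at this
  · intro hv; subst hv; ext i; simp [mem_suppV]

/-- `w` is conformal to `v`. -/
def Conf (w v : ↥Pp → ℚ) : Prop := ∀ i, (0 ≤ v i → 0 ≤ w i) ∧ (v i ≤ 0 → w i ≤ 0)

lemma Conf.trans {a b c : ↥Pp → ℚ} (hab : Conf a b) (hbc : Conf b c) : Conf a c :=
  fun i => ⟨fun hc => (hab i).1 ((hbc i).1 hc), fun hc => (hab i).2 ((hbc i).2 hc)⟩

lemma Conf.refl (v : ↥Pp → ℚ) : Conf v v := fun i => ⟨id, id⟩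

lemma Conf.eq_zero {w v : ↥Pp → ℚ} (hc : Conf w v) {i : ↥Pp} (hv : v i = 0) : w i = 0 :=
  le_antisymm ((hc i).2 hv.le) ((hc i).1 hv.ge)

lemma Conf.suppV_subset {w v : ↥Pp → ℚ} (hc : Conf w v) : suppV w ⊆ suppV v := by
  intro i hi
  rw [mem_suppV] at hi ⊢
  intro hv
  exact hi (hc.eq_zero hv)

lemma Conf.smul {w v : ↥Pp → ℚ} (hc : Conf w v) {t : ℚ} (ht : 0 ≤ t) : Conf (t • w) v := by
  intro i
  refine ⟨fun hv => ?_, fun hv => ?_⟩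
  · exact smul_nonneg ht ((hc i).1 hv)
  · simpa using smul_nonpos_of_nonneg_of_nonpos ht ((hc i).2 hv)

lemma Conf.add {w w' v : ↥Pp → ℚ} (hc : Conf w v) (hc' : Conf w' v) : Conf (w + w') v := by
  intro i
  refine ⟨fun hv => ?_, fun hv => ?_⟩
  · have := (hc i).1 hv; have := (hc' i).1 hv
    simp only [Pi.add_apply]; linarith
  · have := (hc i).2 hv; have := (hc' i).2 hv
    simp only [Pi.add_apply]; linarith

/-- The key splitting lemma: a sum over the support of a multiset over `G₀` equals a
sum over `Pp` of paired terms. -/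
lemma Setup.sum_split (h : Setup G₀ Pp Pm) {M : Type*} [AddCommMonoid M]
    (S : Multiset (Fin r → ℤ)) (hSG : ∀ g ∈ S, g ∈ G₀)
    (f : (Fin r → ℤ) → M) (hf0 : f 0 = 0) (hfS : ∀ a, a ∉ S → f a = 0) :
    ∑ a ∈ S.toFinset, f a = ∑ i : ↥Pp, (f (i : Fin r → ℤ) + f (-(i : Fin r → ℤ))) := by
  have h1 : ∑ a ∈ S.toFinset, f a = ∑ a ∈ G₀, f a := by
    refine Finset.sum_subset (fun x hx => ?_) (fun x _ hnx => hfS x (by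
      simpa [Multiset.mem_toFinset] using hnx))
    exact hSG x (by simpa [Multiset.mem_toFinset] using hx)
  have h2 : ∑ a ∈ G₀, f a = ∑ a ∈ Pp ∪ Pm, f a := by
    refine (Finset.sum_subset (fun x hx => ?_) (fun x hxG hxn => ?_)).symm
    · rcases Finset.mem_union.mp hx with hx | hx
      exacts [h.Pp_subset x hx, h.Pm_subset x hx]
    · rcases h.cases_mem x hxG with rfl | hP | hM
      · exact hf0
      · exact absurd (Finset.mem_union.mpr (Or.inl hP)) hxn
      · exact absurd (Finset.mem_union.mpr (Or.inr hM)) hxn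
  have h3 : ∑ a ∈ Pp ∪ Pm, f a = ∑ a ∈ Pp, f a + ∑ a ∈ Pm, f a :=
    Finset.sum_union h.disj
  have h4 : ∑ a ∈ Pm, f a = ∑ b ∈ Pp.filter (fun b => -b ∈ Pm), f (-b) := by
    refine Finset.sum_bij' (fun a _ => -a) (fun b _ => -b) ?_ ?_ ?_ ?_ ?_
    · intro a ha
      exact Finset.mem_filter.mpr ⟨h.hmax a ha, by simpa using ha⟩
    · intro b hb
      exact (Finset.mem_filter.mp hb).2
    · intro a _; simp
    · intro b _; simp
    · intro a _; simp
  have h5 : ∑ b ∈ Pp.filter (fun b => -b ∈ Pm), f (-b) = ∑ b ∈ Pp, f (-b) := by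
    refine Finset.sum_subset (Finset.filter_subset _ _) (fun b hb hnb => ?_)
    have hbm : -b ∉ Pm := fun hc => hnb (Finset.mem_filter.mpr ⟨hb, hc⟩)
    refine hfS _ (fun hmem => ?_)
    rcases h.cases_mem _ (hSG _ hmem) with h0 | hP | hM
    · exact h.Pp_ne_zero b hb (by simpa using congrArg Neg.neg h0)
    · exact h.hp b hb hP
    · exact hbm hM
  rw [h1, h2, h3, h4, h5, ← Finset.sum_add_distrib]
  exact (Finset.sum_coe_sort Pp (fun b => f b + f (-b))).symm

end Vec

section Vec2

variable {G₀ Pp Pm : Finset (Fin r → ℤ)}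

/-- the cone membership predicate -/
def InC (G₀ Pp : Finset (Fin r → ℤ)) (v : ↥Pp → ℚ) : Prop :=
  Mmap Pp v = 0 ∧ ∀ i : ↥Pp, v i < 0 → -(i : Fin r → ℤ) ∈ G₀

lemma Setup.Mmap_vec (h : Setup G₀ Pp Pm) (S : Multiset (Fin r → ℤ))
    (hSG : ∀ g ∈ S, g ∈ G₀) : Mmap Pp (vec Pp S) = ratc S.sum := by
  have hmap : ratc S.sum = ∑ a ∈ S.toFinset, (S.count a : ℚ) • ratc a := by
    rw [show ratc S.sum = (S.map ratc).sum from map_multiset_sum ratcHom S,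
      Finset.sum_multiset_map_count]
    exact Finset.sum_congr rfl fun a _ => (Nat.cast_smul_eq_nsmul ℚ _ _).symm
  rw [hmap, h.sum_split S hSG _ (by simp [ratc_zero])
      (fun a ha => by simp [Multiset.count_eq_zero_of_notMem ha]), Mmap_apply]
  refine Finset.sum_congr rfl fun i _ => ?_
  rw [vec, ratc_neg, smul_neg, sub_smul]
  abel

lemma Setup.vec_inC (h : Setup G₀ Pp Pm) {S : Multiset (Fin r → ℤ)}
    (hSG : ∀ g ∈ S, g ∈ G₀) (hsum : S.sum = 0) : InC G₀ Pp (vec Pp S) := by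
  constructor
  · rw [h.Mmap_vec S hSG, hsum, ratc_zero]
  · intro i hi
    have : 0 < S.count (-(i : Fin r → ℤ)) := by
      by_contra hc
      simp only [not_lt, Nat.le_zero] at hc
      rw [vec] at hi
      simp [hc] at hi
      exact absurd (Nat.cast_nonneg _) (not_le.mpr hi)
    exact hSG _ (Multiset.count_pos.mp this)

lemma Setup.card_eq_l1 (h : Setup G₀ Pp Pm) (S : Multiset (Fin r → ℤ))
    (hSG : ∀ g ∈ S, g ∈ G₀) (h0 : (0 : Fin r → ℤ) ∉ S)
    (hnp : ∀ g ∈ S, -g ∉ S) :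
    (Multiset.card S : ℚ) = ∑ i : ↥Pp, |vec Pp S i| := by
  have hcard : (Multiset.card S : ℚ) = ∑ a ∈ S.toFinset, (S.count a : ℚ) := by
    rw [← Multiset.toFinset_sum_count_eq S]
    push_cast
    rfl
  rw [hcard, h.sum_split S hSG _ (by simp [Multiset.count_eq_zero_of_notMem h0])
      (fun a ha => by simp [Multiset.count_eq_zero_of_notMem ha])]
  refine Finset.sum_congr rfl fun i _ => ?_
  rw [vec]
  by_cases hi : (i : Fin r → ℤ) ∈ S
  · have : -(i : Fin r → ℤ) ∉ S := hnp _ hi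
    rw [Multiset.count_eq_zero_of_notMem this]
    simp [abs_of_nonneg]
  · rw [Multiset.count_eq_zero_of_notMem hi]
    simp [abs_of_nonpos]

end Vec2

section SS

variable {G₀ Pp Pm : Finset (Fin r → ℤ)}

lemma Setup.ss_mem (h : Setup G₀ Pp Pm) {S : Multiset (Fin r → ℤ)}
    (hSG : ∀ g ∈ S, g ∈ G₀) {g : Fin r → ℤ} (hg : g ∈ signedSupp S) :
    ∃ i : ↥Pp, vec Pp S i ≠ 0 ∧ (g = (i : Fin r → ℤ) ∨ g = -(i : Fin r → ℤ)) := by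
  have hg' : S.count g ≠ S.count (-g) := hg
  have hvec : ∀ (a : Fin r → ℤ) (ha : a ∈ Pp), g = a ∨ g = -a →
      ∃ i : ↥Pp, vec Pp S i ≠ 0 ∧ (g = (i : Fin r → ℤ) ∨ g = -(i : Fin r → ℤ)) := by
    intro a ha hcase
    refine ⟨⟨a, ha⟩, ?_, hcase⟩
    rw [vec]
    rcases hcase with rfl | rfl
    · exact sub_ne_zero.mpr (fun hc => hg' (by exact_mod_cast hc))
    · refine sub_ne_zero.mpr (fun hc => hg' ?_)
      rw [neg_neg]
      exact_mod_cast hc.symm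
  by_cases hgG : g ∈ G₀
  · rcases h.cases_mem g hgG with rfl | hP | hM
    · simp at hg'
    · exact hvec g hP (Or.inl rfl)
    · exact hvec (-g) (h.hmax g hM) (Or.inr (neg_neg g).symm)
  · have hgS : g ∉ S := fun hc => hgG (hSG g hc)
    have hcg : S.count g = 0 := Multiset.count_eq_zero_of_notMem hgS
    have hng : -g ∈ G₀ := by
      refine hSG _ (Multiset.count_pos.mp ?_)
      omega
    rcases h.cases_mem (-g) hng with h0 | hP | hM
    · have : g = 0 := by simpa using congrArg Neg.neg h0
      subst this; simp at hg'
    · exact hvec (-g) hP (Or.inr (neg_neg g).symm)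
    · exact absurd (h.Pp_subset _ (h.hmax _ hM)) (by simpa using hgG)

lemma Setup.ss_mem' (h : Setup G₀ Pp Pm) {S : Multiset (Fin r → ℤ)} {i : ↥Pp}
    (hi : vec Pp S i ≠ 0) :
    (i : Fin r → ℤ) ∈ signedSupp S ∧ (-(i : Fin r → ℤ)) ∈ signedSupp S := by
  rw [vec, sub_ne_zero] at hi
  have hi' : S.count (i : Fin r → ℤ) ≠ S.count (-(i : Fin r → ℤ)) := by
    intro hc; exact hi (by exact_mod_cast hc)
  constructor
  · exact hi'
  · show S.count _ ≠ S.count _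
    rw [neg_neg]
    exact hi'.symm

lemma Setup.ss_subset_iff (h : Setup G₀ Pp Pm) {S T : Multiset (Fin r → ℤ)}
    (hSG : ∀ g ∈ S, g ∈ G₀) (hTG : ∀ g ∈ T, g ∈ G₀) :
    signedSupp T ⊆ signedSupp S ↔ suppV (vec Pp T) ⊆ suppV (vec Pp S) := by
  constructor
  · intro hss i hi
    rw [mem_suppV] at hi ⊢
    have hmem := (h.ss_mem' hi).1
    obtain ⟨j, hj, hcase⟩ := h.ss_mem hSG (hss hmem)
    rcases hcase with hc | hc
    · rwa [show i = j from Subtype.ext hc]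
    · exact absurd (hc ▸ i.2) (h.hp _ j.2)
  · intro hsup g hg
    obtain ⟨i, hi, hcase⟩ := h.ss_mem hTG hg
    have hi' : vec Pp S i ≠ 0 := mem_suppV.mp (hsup (mem_suppV.mpr hi))
    rcases hcase with rfl | rfl
    · exact (h.ss_mem' hi').1
    · exact (h.ss_mem' hi').2

lemma Setup.ss_nonempty_iff (h : Setup G₀ Pp Pm) {S : Multiset (Fin r → ℤ)}
    (hSG : ∀ g ∈ S, g ∈ G₀) :
    signedSupp S ≠ ∅ ↔ vec Pp S ≠ 0 := by
  constructor
  · intro hne hv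
    rcases Set.nonempty_iff_ne_empty.mpr hne with ⟨g, hg⟩
    obtain ⟨i, hi, -⟩ := h.ss_mem hSG hg
    rw [hv] at hi; simp at hi
  · intro hv
    have : ∃ i, vec Pp S i ≠ 0 := by
      by_contra hc
      push_neg at hc
      exact hv (funext hc)
    obtain ⟨i, hi⟩ := this
    exact Set.nonempty_iff_ne_empty.mp ⟨_, (h.ss_mem' hi).1⟩

lemma Setup.ss_eq_of_suppV_eq (h : Setup G₀ Pp Pm) {S T : Multiset (Fin r → ℤ)}
    (hSG : ∀ g ∈ S, g ∈ G₀) (hTG : ∀ g ∈ T, g ∈ G₀)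
    (heq : suppV (vec Pp T) = suppV (vec Pp S)) : signedSupp T = signedSupp S :=
  Set.Subset.antisymm ((h.ss_subset_iff hSG hTG).mpr heq.le)
    ((h.ss_subset_iff hTG hSG).mpr heq.ge)

end SS

section Wmul

variable {G₀ Pp Pm : Finset (Fin r → ℤ)}

/-- the multiset associated to an integer vector -/
def Wmul (Pp : Finset (Fin r → ℤ)) (w : ↥Pp → ℤ) : Multiset (Fin r → ℤ) :=
  ∑ i : ↥Pp, (Multiset.replicate (w i).toNat (i : Fin r → ℤ) +
    Multiset.replicate (-w i).toNat (-(i : Fin r → ℤ)))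

lemma Wmul_mem {w : ↥Pp → ℤ} {g : Fin r → ℤ} (hg : g ∈ Wmul Pp w) :
    ∃ i : ↥Pp, (g = (i : Fin r → ℤ) ∧ 0 < w i) ∨ (g = -(i : Fin r → ℤ) ∧ w i < 0) := by
  rw [Wmul, Multiset.mem_sum] at hg
  obtain ⟨i, -, hi⟩ := hg
  rcases Multiset.mem_add.mp hi with hrep | hrep
  · refine ⟨i, Or.inl ⟨Multiset.eq_of_mem_replicate hrep, ?_⟩⟩
    have hne : (w i).toNat ≠ 0 := by
      intro hc; rw [hc] at hrep; simp at hrep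
    omega
  · refine ⟨i, Or.inr ⟨Multiset.eq_of_mem_replicate hrep, ?_⟩⟩
    have hne : (-w i).toNat ≠ 0 := by
      intro hc; rw [hc] at hrep; simp at hrep
    omega

lemma Setup.Wmul_count_pos (h : Setup G₀ Pp Pm) (w : ↥Pp → ℤ) (j : ↥Pp) :
    (Wmul Pp w).count (j : Fin r → ℤ) = (w j).toNat := by
  have hterm : ∀ i : ↥Pp,
      (Multiset.replicate (w i).toNat (i : Fin r → ℤ) +
        Multiset.replicate (-w i).toNat (-(i : Fin r → ℤ))).count (j : Fin r → ℤ) =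
      if i = j then (w i).toNat else 0 := by
    intro i
    rw [Multiset.count_add, Multiset.count_replicate, Multiset.count_replicate]
    have h2 : ¬(-(i : Fin r → ℤ) = (j : Fin r → ℤ)) := fun hc => h.hp _ i.2 (hc ▸ j.2)
    by_cases hij : i = j
    · subst hij; simp [h2]
    · have h1 : ¬((i : Fin r → ℤ) = (j : Fin r → ℤ)) := fun hc => hij (Subtype.ext hc)
      simp [h1, h2, hij]
  rw [Wmul, Multiset.count_sum']
  simp_rw [hterm]
  simp

lemma Setup.Wmul_count_neg (h : Setup G₀ Pp Pm) (w : ↥Pp → ℤ) (j : ↥Pp) :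
    (Wmul Pp w).count (-(j : Fin r → ℤ)) = (-w j).toNat := by
  have hterm : ∀ i : ↥Pp,
      (Multiset.replicate (w i).toNat (i : Fin r → ℤ) +
        Multiset.replicate (-w i).toNat (-(i : Fin r → ℤ))).count (-(j : Fin r → ℤ)) =
      if i = j then (-w i).toNat else 0 := by
    intro i
    rw [Multiset.count_add, Multiset.count_replicate, Multiset.count_replicate]
    have h1 : ¬((i : Fin r → ℤ) = -(j : Fin r → ℤ)) := fun hc => h.hp _ j.2 (hc ▸ i.2)
    by_cases hij : i = j
    · subst hij; simp [h1]
    · have h2 : ¬(-(i : Fin r → ℤ) = -(j : Fin r → ℤ)) := by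
        intro hc
        exact hij (Subtype.ext (by simpa using congrArg Neg.neg hc))
      simp [h1, h2, hij]
  rw [Wmul, Multiset.count_sum']
  simp_rw [hterm]
  simp

lemma Setup.vec_Wmul (h : Setup G₀ Pp Pm) (w : ↥Pp → ℤ) :
    vec Pp (Wmul Pp w) = fun i => (w i : ℚ) := by
  funext i
  rw [vec, h.Wmul_count_pos w i, h.Wmul_count_neg w i]
  have h2 : ((w i).toNat : ℤ) - ((-w i).toNat : ℤ) = w i := by omega
  exact_mod_cast h2

lemma Setup.card_Wmul (h : Setup G₀ Pp Pm) (w : ↥Pp → ℤ) :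
    (Multiset.card (Wmul Pp w) : ℚ) = ∑ i : ↥Pp, |(w i : ℚ)| := by
  rw [Wmul, Multiset.card_sum]
  push_cast
  refine Finset.sum_congr rfl fun i _ => ?_
  rw [Multiset.card_add, Multiset.card_replicate, Multiset.card_replicate]
  have h2 : (((w i).toNat + (-w i).toNat : ℕ) : ℤ) = |w i| := by
    rw [abs_eq_max_neg]; omega
  have h3 : |(w i : ℚ)| = ((|w i| : ℤ) : ℚ) := by
    rw [Int.cast_abs]
  rw [h3, ← h2]
  push_cast
  ring

lemma Setup.Wmul_memG (h : Setup G₀ Pp Pm) {w : ↥Pp → ℤ}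
    (hG : ∀ i : ↥Pp, w i < 0 → -(i : Fin r → ℤ) ∈ G₀) :
    ∀ g ∈ Wmul Pp w, g ∈ G₀ := by
  intro g hg
  obtain ⟨i, hi⟩ := Wmul_mem hg
  rcases hi with ⟨rfl, -⟩ | ⟨rfl, hneg⟩
  · exact h.Pp_subset _ i.2
  · exact hG i hneg

lemma Setup.Wmul_sum (h : Setup G₀ Pp Pm) {w : ↥Pp → ℤ}
    (hG : ∀ i : ↥Pp, w i < 0 → -(i : Fin r → ℤ) ∈ G₀)
    (hker : Mmap Pp (fun i => (w i : ℚ)) = 0) : (Wmul Pp w).sum = 0 := by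
  apply ratc_inj
  rw [ratc_zero, ← h.Mmap_vec _ (h.Wmul_memG hG), h.vec_Wmul w, hker]

end Wmul

section Surgery

variable {G₀ Pp Pm : Finset (Fin r → ℤ)}

/-- elementary vector: in the cone, nonzero, and any kernel vector supported inside its
support is a multiple of it -/
def ElemV (G₀ Pp : Finset (Fin r → ℤ)) (w : ↥Pp → ℚ) : Prop :=
  InC G₀ Pp w ∧ w ≠ 0 ∧
    ∀ z : ↥Pp → ℚ, Mmap Pp z = 0 → suppV z ⊆ suppV w → ∃ c : ℚ, z = c • w

lemma surgery {v z : ↥Pp → ℚ} (hsub : suppV z ⊆ suppV v)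
    (hex : ∃ j ∈ suppV z, 0 < v j * z j) :
    ∃ (t : ℚ), 0 < t ∧ Conf (v - t • z) v ∧ suppV (v - t • z) ⊂ suppV v := by
  classical
  set F := (suppV z).filter (fun i => 0 < v i * z i) with hF
  have hFne : F.Nonempty := by
    obtain ⟨j, hj, hjpos⟩ := hex
    exact ⟨j, Finset.mem_filter.mpr ⟨hj, hjpos⟩⟩
  obtain ⟨j, hjF, hjmin⟩ := F.exists_min_image (fun i => v i / z i) hFne
  have hjz : z j ≠ 0 := mem_suppV.mp (Finset.mem_filter.mp hjF).1
  have hjpos : 0 < v j * z j := (Finset.mem_filter.mp hjF).2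
  set t := v j / z j with htdef
  have ht : 0 < t := div_pos_iff.mpr (by rcases mul_pos_iff.mp hjpos with h | h
                                         · exact Or.inl h
                                         · exact Or.inr h)
  have hconf : Conf (v - t • z) v := by
    intro i
    by_cases hzi : z i = 0
    · simp [hzi]
    · have hvi : v i ≠ 0 := mem_suppV.mp (hsub (mem_suppV.mpr hzi))
      simp only [Pi.sub_apply, Pi.smul_apply, smul_eq_mul]
      rcases lt_trichotomy (v i * z i) 0 with hneg | hzero | hpos
      · rcases mul_neg_iff.mp hneg with ⟨hv1, hz1⟩ | ⟨hv1, hz1⟩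
        · constructor
          · intro _; nlinarith
          · intro h'; nlinarith
        · constructor
          · intro h'; nlinarith
          · intro _; nlinarith
      · exact absurd hzero (mul_ne_zero hvi hzi)
      · have hiF : i ∈ F := Finset.mem_filter.mpr ⟨mem_suppV.mpr hzi, hpos⟩
        have hle : t ≤ v i / z i := hjmin i hiF
        rcases mul_pos_iff.mp hpos with ⟨hv1, hz1⟩ | ⟨hv1, hz1⟩
        · have : t * z i ≤ v i := by
            rwa [le_div_iff₀ hz1] at hle
          constructor
          · intro _; linarith
          · intro h'; linarith
        · have : v i ≤ t * z i := by
            rwa [le_div_iff_of_neg hz1] at hle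
          constructor
          · intro h'; linarith
          · intro _; linarith
  refine ⟨t, ht, hconf, ?_⟩
  have hzeroj : (v - t • z) j = 0 := by
    simp only [Pi.sub_apply, Pi.smul_apply, smul_eq_mul, htdef]
    field_simp
    ring
  rw [Finset.ssubset_iff_of_subset hconf.suppV_subset]
  exact ⟨j, hsub (Finset.mem_filter.mp hjF).1, fun hc => (mem_suppV.mp hc) hzeroj⟩

lemma exists_elem_conf {v : ↥Pp → ℚ} (hv : InC G₀ Pp v) (hv0 : v ≠ 0) :
    ∃ w, ElemV G₀ Pp w ∧ Conf w v := by
  classical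
  set P : (↥Pp → ℚ) → Prop := fun w => Mmap Pp w = 0 ∧ Conf w v ∧ w ≠ 0 with hP
  have hPv : P v := ⟨hv.1, Conf.refl v, hv0⟩
  set sset : Set ℕ := {n | ∃ w, P w ∧ (suppV w).card = n} with hsset
  have hne : sset.Nonempty := ⟨_, v, hPv, rfl⟩
  obtain ⟨w, hPw, hcard⟩ := Nat.sInf_mem hne
  have hmin : ∀ u, P u → sInf sset ≤ (suppV u).card := fun u hu => Nat.sInf_le ⟨u, hu, rfl⟩
  have hconf_wv : Conf w v := hPw.2.1
  have hInCw : InC G₀ Pp w := by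
    refine ⟨hPw.1, fun i hi => hv.2 i ?_⟩
    by_contra hc
    push_neg at hc
    exact absurd ((hconf_wv i).1 hc) (not_le.mpr hi)
  -- no nonzero kernel vector has support strictly inside supp w
  have hNoSmall : ∀ z : ↥Pp → ℚ, Mmap Pp z = 0 → suppV z ⊂ suppV w → z = 0 := by
    intro z hkerz hss
    by_contra hz0
    have key : ∀ z' : ↥Pp → ℚ, Mmap Pp z' = 0 → z' ≠ 0 → suppV z' ⊂ suppV w →
        (∃ j ∈ suppV z', 0 < w j * z' j) → False := by
      intro z' hker' hz0' hss' hex'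
      obtain ⟨t, ht, hconf, hssub⟩ := surgery (subset_of_ssubset hss') hex'
      have hw'0 : w - t • z' ≠ 0 := by
        intro hc
        rw [sub_eq_zero] at hc
        have hsupp : suppV w = suppV z' := by
          rw [hc]
          ext i
          simp [mem_suppV, smul_ne_zero_iff, ht.ne']
        exact (Finset.ssubset_iff_subset_ne.mp hss').2 hsupp.symm
      have hPw' : P (w - t • z') := by
        refine ⟨?_, hconf.trans hconf_wv, hw'0⟩
        rw [map_sub, map_smul, hPw.1, hker', smul_zero, sub_zero]
      have h1 := hmin _ hPw'
      have h2 : (suppV (w - t • z')).card < (suppV w).card := Finset.card_lt_card hssub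
      omega
    by_cases hex : ∃ j ∈ suppV z, 0 < w j * z j
    · exact key z hkerz hz0 hss hex
    · push_neg at hex
      refine key (-z) (by rw [map_neg, hkerz, neg_zero]) (by simpa using hz0) ?_ ?_
      · have : suppV (-z) = suppV z := by ext i; simp [mem_suppV]
        rwa [this]
      · have hzne : ∃ j, z j ≠ 0 := by
          by_contra hc; push_neg at hc; exact hz0 (funext hc)
        obtain ⟨j, hj⟩ := hzne
        have hjw : w j ≠ 0 := mem_suppV.mp (hss.subset (mem_suppV.mpr hj))
        refine ⟨j, by simpa [mem_suppV] using hj, ?_⟩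
        have hprod : w j * z j ≠ 0 := mul_ne_zero hjw hj
        have := hex j (mem_suppV.mpr hj)
        have : w j * z j < 0 := lt_of_le_of_ne this hprod
        simp only [Pi.neg_apply, mul_neg]
        linarith
  refine ⟨w, ⟨hInCw, hPw.2.2, ?_⟩, hconf_wv⟩
  intro z hkerz hsubz
  by_cases hz0 : z = 0
  · exact ⟨0, by simp [hz0]⟩
  · have hsupp_eq : suppV z = suppV w := by
      by_contra hne'
      exact hz0 (hNoSmall z hkerz (Finset.ssubset_iff_subset_ne.mpr ⟨hsubz, hne'⟩))
    have hwne : suppV w ≠ ∅ := by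
      intro hc; exact hPw.2.2 (suppV_eq_empty.mp hc)
    obtain ⟨j, hj⟩ := Finset.nonempty_iff_ne_empty.mpr hwne
    have hwj : w j ≠ 0 := mem_suppV.mp hj
    refine ⟨z j / w j, ?_⟩
    have hz' : z - (z j / w j) • w = 0 := by
      apply hNoSmall
      · rw [map_sub, map_smul, hkerz, hPw.1, smul_zero, sub_zero]
      · rw [Finset.ssubset_iff_of_subset]
        · refine ⟨j, hj, fun hc => mem_suppV.mp hc ?_⟩
          simp only [Pi.sub_apply, Pi.smul_apply, smul_eq_mul]
          field_simp
          ring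
        · intro i hi
          rw [mem_suppV] at hi ⊢
          intro hwi
          apply hi
          have hzi : z i = 0 := by
            have : i ∉ suppV z := by rw [hsupp_eq]; exact fun hc => (mem_suppV.mp hc) hwi
            by_contra hc
            exact this (mem_suppV.mpr hc)
          simp [hzi, hwi]
    have := sub_eq_zero.mp hz'
    exact this

end Surgery

section Decomp

variable {G₀ Pp Pm : Finset (Fin r → ℤ)}

lemma decomp : ∀ (n : ℕ) (v : ↥Pp → ℚ), (suppV v).card ≤ n → InC G₀ Pp v →
    ∃ (k : ℕ) (lam : Fin k → ℚ) (w : Fin k → (↥Pp → ℚ)),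
      (∀ i, 0 < lam i) ∧ (∀ i, ElemV G₀ Pp (w i)) ∧ (∀ i, Conf (w i) v) ∧
      v = ∑ i, lam i • w i := by
  intro n
  induction n with
  | zero =>
    intro v hcard _
    have hv0 : v = 0 := by
      rw [← suppV_eq_empty]
      exact Finset.card_eq_zero.mp (Nat.le_zero.mp hcard)
    exact ⟨0, Fin.elim0, Fin.elim0, (fun i => i.elim0), (fun i => i.elim0),
      (fun i => i.elim0), by simp [hv0]⟩
  | succ n ih =>
    intro v hcard hv
    by_cases hv0 : v = 0
    · exact ⟨0, Fin.elim0, Fin.elim0, (fun i => i.elim0), (fun i => i.elim0),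
        (fun i => i.elim0), by simp [hv0]⟩
    obtain ⟨w, hw, hconf⟩ := exists_elem_conf hv hv0
    have hex : ∃ j ∈ suppV w, 0 < v j * w j := by
      have : suppV w ≠ ∅ := fun hc => hw.2.1 (suppV_eq_empty.mp hc)
      obtain ⟨j, hj⟩ := Finset.nonempty_iff_ne_empty.mpr this
      refine ⟨j, hj, ?_⟩
      have hwj : w j ≠ 0 := mem_suppV.mp hj
      rcases lt_trichotomy (w j) 0 with hlt | heq | hgt
      · have hvj : v j < 0 := by
          by_contra hc
          push_neg at hc
          exact absurd ((hconf j).1 hc) (not_le.mpr hlt)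
        exact mul_pos_of_neg_of_neg hvj hlt
      · exact absurd heq hwj
      · have hvj : 0 < v j := by
          by_contra hc
          push_neg at hc
          exact absurd ((hconf j).2 hc) (not_le.mpr hgt)
        exact mul_pos hvj hgt
    obtain ⟨t, ht, hconf', hssub⟩ := surgery hconf.suppV_subset hex
    set v' := v - t • w with hv'
    have hcard' : (suppV v').card ≤ n := by
      have := Finset.card_lt_card hssub
      omega
    have hInC' : InC G₀ Pp v' := by
      constructor
      · rw [hv', map_sub, map_smul, hv.1, hw.1.1, smul_zero, sub_zero]
      · intro i hi
        apply hv.2 i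
        by_contra hc
        push_neg at hc
        exact absurd ((hconf' i).1 hc) (not_le.mpr hi)
    obtain ⟨k, lam, ws, hlam, helem, hconfs, hsum⟩ := ih v' hcard' hInC'
    refine ⟨k + 1, Fin.cons t lam, Fin.cons w ws, ?_, ?_, ?_, ?_⟩
    · intro i
      refine Fin.cases ?_ ?_ i
      · simpa using ht
      · intro j; simpa using hlam j
    · intro i
      refine Fin.cases ?_ ?_ i
      · simpa using hw
      · intro j; simpa using helem j
    · intro i
      refine Fin.cases ?_ ?_ i
      · simpa using hconf
      · intro j; simpa using (hconfs j).trans hconf'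
    · rw [Fin.sum_univ_succ]
      simp only [Fin.cons_zero, Fin.cons_succ]
      rw [← hsum, hv']
      abel

lemma carath : ∀ (n : ℕ) {k : ℕ} (w : Fin k → (↥Pp → ℚ)) (s : Finset (Fin k))
    (lam : Fin k → ℚ), s.card ≤ n → (∀ i ∈ s, 0 < lam i) →
    ∃ (s' : Finset (Fin k)) (lam' : Fin k → ℚ), s' ⊆ s ∧ (∀ i ∈ s', 0 < lam' i) ∧
      (∑ i ∈ s', lam' i • w i) = (∑ i ∈ s, lam i • w i) ∧
      LinearIndependent ℚ (fun i : ↥s' => w i) := by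
  intro n
  induction n with
  | zero =>
    intro k w s lam hcard _
    have hs : s = ∅ := Finset.card_eq_zero.mp (Nat.le_zero.mp hcard)
    subst hs
    exact ⟨∅, lam, le_refl _, by simp, rfl, linearIndependent_empty_type⟩
  | succ n ih =>
    intro k w s lam hcard hpos
    by_cases hlin : LinearIndependent ℚ (fun i : ↥s => w i)
    · exact ⟨s, lam, le_refl _, hpos, rfl, hlin⟩
    obtain ⟨g, hgsum, i₀, hgi₀⟩ := Fintype.not_linearIndependent_iff.mp hlin
    classical
    set c : Fin k → ℚ := fun i => if h : i ∈ s then g ⟨i, h⟩ else 0 with hc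
    have hrel : ∑ i ∈ s, c i • w i = 0 := by
      rw [← Finset.sum_attach s (fun i => c i • w i), ← hgsum, Finset.univ_eq_attach]
      refine Finset.sum_congr rfl fun x _ => ?_
      simp [hc, x.2]
    have main : ∀ c' : Fin k → ℚ, (∑ i ∈ s, c' i • w i = 0) → (∃ i ∈ s, 0 < c' i) →
        ∃ (lam'' : Fin k → ℚ) (j : Fin k), j ∈ s ∧ (∀ i ∈ s, 0 ≤ lam'' i) ∧ lam'' j = 0 ∧
          ∑ i ∈ s, lam'' i • w i = ∑ i ∈ s, lam i • w i := by
      intro c' hrel' hex'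
      set F := s.filter (fun i => 0 < c' i) with hF
      have hFne : F.Nonempty := by
        obtain ⟨i, hi, hipos⟩ := hex'
        exact ⟨i, Finset.mem_filter.mpr ⟨hi, hipos⟩⟩
      obtain ⟨j, hjF, hjmin⟩ := F.exists_min_image (fun i => lam i / c' i) hFne
      have hjs : j ∈ s := (Finset.mem_filter.mp hjF).1
      have hjc : 0 < c' j := (Finset.mem_filter.mp hjF).2
      set t := lam j / c' j with htdef
      have ht : 0 < t := div_pos (hpos j hjs) hjc
      refine ⟨fun i => lam i - t * c' i, j, hjs, ?_, ?_, ?_⟩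
      · intro i hi
        dsimp only
        by_cases hci : 0 < c' i
        · have hle : t ≤ lam i / c' i := hjmin i (Finset.mem_filter.mpr ⟨hi, hci⟩)
          rw [le_div_iff₀ hci] at hle
          linarith
        · push_neg at hci
          have := hpos i hi
          nlinarith
      · show lam j - t * c' j = 0
        rw [htdef]
        field_simp
        ring
      · dsimp only
        have : ∑ i ∈ s, (lam i - t * c' i) • w i =
            ∑ i ∈ s, lam i • w i - t • ∑ i ∈ s, c' i • w i := by
          rw [Finset.smul_sum, ← Finset.sum_sub_distrib]
          refine Finset.sum_congr rfl fun i _ => ?_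
          rw [sub_smul, smul_smul]
        rw [this, hrel', smul_zero, sub_zero]
    have hex : (∃ i ∈ s, 0 < c i) ∨ (∃ i ∈ s, 0 < (-c) i) := by
      have hci₀ : c (i₀ : Fin k) ≠ 0 := by
        simpa [hc, i₀.2] using hgi₀
      rcases lt_trichotomy (c (i₀ : Fin k)) 0 with hlt | heq | hgt
      · exact Or.inr ⟨i₀, i₀.2, by simpa using hlt⟩
      · exact absurd heq hci₀
      · exact Or.inl ⟨i₀, i₀.2, hgt⟩
    have hrel_neg : ∑ i ∈ s, (-c) i • w i = 0 := by
      simp only [Pi.neg_apply, neg_smul]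
      rw [Finset.sum_neg_distrib, hrel, neg_zero]
    obtain ⟨lam'', j, hjs, hnneg, hjzero, hsum''⟩ :=
      hex.elim (main c hrel) (main (-c) hrel_neg)
    set s'' := s.filter (fun i => lam'' i ≠ 0) with hs''
    have hsub'' : s'' ⊆ s := Finset.filter_subset _ _
    have hcard'' : s''.card ≤ n := by
      have hnotin : j ∉ s'' := by
        simp [hs'', hjzero]
      have : s'' ⊂ s := Finset.ssubset_iff_subset_ne.mpr
        ⟨hsub'', fun hc' => hnotin (hc' ▸ hjs)⟩
      have := Finset.card_lt_card this
      omega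
    have hpos'' : ∀ i ∈ s'', 0 < lam'' i := by
      intro i hi
      have h1 := hnneg i (hsub'' hi)
      have h2 : lam'' i ≠ 0 := (Finset.mem_filter.mp hi).2
      exact lt_of_le_of_ne h1 (Ne.symm h2)
    have hsum_s'' : ∑ i ∈ s'', lam'' i • w i = ∑ i ∈ s, lam'' i • w i := by
      refine Finset.sum_subset hsub'' (fun i hi hni => ?_)
      have : lam'' i = 0 := by
        by_contra hc'
        exact hni (Finset.mem_filter.mpr ⟨hi, hc'⟩)
      simp [this]
    obtain ⟨s', lam', hsub', hpos', hsum', hlin'⟩ := ih w s'' lam'' hcard'' hpos''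
    exact ⟨s', lam', hsub'.trans hsub'', hpos', by rw [hsum', hsum_s'', hsum''], hlin'⟩

end Decomp

section Dim

variable {G₀ Pp Pm : Finset (Fin r → ℤ)}

lemma Setup.dim_bound (h : Setup G₀ Pp Pm) {k : ℕ} (w : Fin k → (↥Pp → ℚ))
    (s : Finset (Fin k)) (hker : ∀ i ∈ s, Mmap Pp (w i) = 0)
    (hlin : LinearIndependent ℚ (fun i : ↥s => w i)) :
    s.card ≤ Pp.card - Module.finrank ℚ (Submodule.span ℚ (ratc '' (↑G₀ : Set (Fin r → ℤ)))) := by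
  classical
  have hrange : LinearMap.range (Mmap Pp) =
      Submodule.span ℚ (ratc '' (↑G₀ : Set (Fin r → ℤ))) := by
    rw [Mmap, Fintype.range_linearCombination]
    have himg : Set.range (fun i : ↥Pp => ratc (i : Fin r → ℤ)) =
        ratc '' (↑Pp : Set (Fin r → ℤ)) := by
      rw [show (fun i : ↥Pp => ratc (i : Fin r → ℤ)) = ratc ∘ Subtype.val from rfl,
        Set.range_comp, Subtype.range_val]
    rw [himg]
    apply le_antisymm
    · exact Submodule.span_mono (Set.image_mono (Finset.coe_subset.mpr
        (fun a ha => h.Pp_subset a ha)))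
    · rw [Submodule.span_le]
      rintro x ⟨g, hg, rfl⟩
      rcases h.cases_mem g hg with rfl | hP | hM
      · rw [ratc_zero]; exact Submodule.zero_mem _
      · exact Submodule.subset_span ⟨g, hP, rfl⟩
      · have hmem : ratc (-g) ∈ Submodule.span ℚ (ratc '' (↑Pp : Set (Fin r → ℤ))) :=
          Submodule.subset_span ⟨-g, h.hmax g hM, rfl⟩
        rw [show ratc g = -(ratc (-g)) by rw [ratc_neg, neg_neg]]
        exact Submodule.neg_mem _ hmem
  have hrank := LinearMap.finrank_range_add_finrank_ker (Mmap Pp)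
  have hdom : Module.finrank ℚ (↥Pp → ℚ) = Pp.card := by
    rw [Module.finrank_fintype_fun_eq_card, Fintype.card_coe]
  have hspan : Submodule.span ℚ (Set.range (fun i : ↥s => w i)) ≤
      LinearMap.ker (Mmap Pp) := by
    rw [Submodule.span_le]
    rintro x ⟨i, rfl⟩
    exact LinearMap.mem_ker.mpr (hker (i : Fin k) i.2)
  have hcard : s.card = Module.finrank ℚ
      (Submodule.span ℚ (Set.range (fun i : ↥s => w i))) := by
    rw [finrank_span_eq_card hlin, Fintype.card_coe]
  have hle : s.card ≤ Module.finrank ℚ (LinearMap.ker (Mmap Pp)) := by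
    rw [hcard]
    exact Submodule.finrank_mono hspan
  rw [hrange, hdom] at hrank
  omega

lemma scale {w : ↥Pp → ℚ} (hw0 : w ≠ 0) :
    ∃ (wz : ↥Pp → ℤ) (c : ℚ), 0 < c ∧ (fun i => (wz i : ℚ)) = c • w ∧
      Finset.gcd Finset.univ wz = 1 := by
  classical
  set d : ℕ := ∏ i : ↥Pp, (w i).den with hd
  have hd0 : 0 < d := Finset.prod_pos (fun i _ => (w i).pos)
  have key : ∀ i : ↥Pp, (d : ℚ) * w i = (((d : ℚ) * w i).num : ℚ) := by
    intro i
    have hdvd : (w i).den ∣ d := Finset.dvd_prod_of_mem (fun i => (w i).den) (Finset.mem_univ i)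
    obtain ⟨e, he⟩ := hdvd
    have hden : ((w i).den : ℚ) ≠ 0 := Nat.cast_ne_zero.mpr (w i).den_nz
    have h2 : ((w i).den : ℚ) * w i = ((w i).num : ℚ) := by
      rw [mul_comm]
      exact (eq_div_iff hden).mp (Rat.num_div_den (w i)).symm
    have h1 : (d : ℚ) * w i = (((e : ℤ) * (w i).num : ℤ) : ℚ) := by
      rw [he]
      push_cast
      rw [mul_comm ((w i).den : ℚ) (e : ℚ), mul_assoc, h2]
    rw [h1, Rat.num_intCast]
  set nv : ↥Pp → ℤ := fun i => ((d : ℚ) * w i).num with hnv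
  have hnv_cast : ∀ i, ((nv i : ℤ) : ℚ) = (d : ℚ) * w i := fun i => (key i).symm
  obtain ⟨i₀, hi₀⟩ : ∃ i, w i ≠ 0 := by
    by_contra hc; push_neg at hc; exact hw0 (funext hc)
  have hnv₀ : nv i₀ ≠ 0 := by
    intro hc
    have := hnv_cast i₀
    rw [hc] at this
    simp only [Int.cast_zero] at this
    rcases mul_eq_zero.mp this.symm with h1 | h1
    · exact absurd h1 (Nat.cast_ne_zero.mpr hd0.ne')
    · exact hi₀ h1
  set g : ℤ := Finset.gcd Finset.univ nv with hg
  have hgne : g ≠ 0 := by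
    rw [hg, Ne, Finset.gcd_eq_zero_iff]
    intro hc
    exact hnv₀ (hc i₀ (Finset.mem_univ i₀))
  have hgpos : 0 < g := by
    rcases lt_or_eq_of_le (show (0:ℤ) ≤ g by
      rw [hg, ← Finset.normalize_gcd, ← Int.abs_eq_normalize]
      exact abs_nonneg _) with h1 | h1
    · exact h1
    · exact absurd h1.symm hgne
  refine ⟨fun i => nv i / g, (d : ℚ) / (g : ℚ), ?_, ?_, ?_⟩
  · apply div_pos
    · exact_mod_cast hd0
    · exact_mod_cast hgpos
  · funext i
    obtain ⟨m, hm⟩ : g ∣ nv i := Finset.gcd_dvd (Finset.mem_univ i)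
    have hcast := hnv_cast i
    show ((nv i / g : ℤ) : ℚ) = ((d : ℚ) / (g : ℚ)) • w i
    rw [hm] at hcast ⊢
    rw [Int.mul_ediv_cancel_left _ hgne]
    push_cast at hcast
    have hgq : (g : ℚ) ≠ 0 := Int.cast_ne_zero.mpr hgne
    rw [smul_eq_mul]
    field_simp
    linarith
  · exact Finset.gcd_div_eq_one (Finset.mem_univ i₀) hnv₀

end Dim

section ElemAtom

variable {G₀ Pp Pm : Finset (Fin r → ℤ)}

lemma vec_zero : vec Pp (0 : Multiset (Fin r → ℤ)) = 0 := by
  funext i; simp [vec]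

lemma ElemV.smul {w : ↥Pp → ℚ} (hw : ElemV G₀ Pp w) {c : ℚ} (hc : 0 < c) :
    ElemV G₀ Pp (c • w) := by
  refine ⟨⟨?_, ?_⟩, ?_, ?_⟩
  · rw [map_smul, hw.1.1, smul_zero]
  · intro i hi
    apply hw.1.2 i
    simp only [Pi.smul_apply, smul_eq_mul] at hi
    nlinarith
  · exact smul_ne_zero hc.ne' hw.2.1
  · intro z hz hsub
    have hsupp : suppV (c • w) = suppV w := by
      ext i; simp [mem_suppV, hc.ne']
    obtain ⟨c'', hc''⟩ := hw.2.2 z hz (hsupp ▸ hsub)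
    exact ⟨c'' / c, by rw [hc'', smul_smul, div_mul_cancel₀ _ hc.ne']⟩

lemma Setup.Wmul_elemAtom (h : Setup G₀ Pp Pm) {wz : ↥Pp → ℤ}
    (hgcd : Finset.gcd Finset.univ wz = 1)
    (helem : ElemV G₀ Pp (fun i => (wz i : ℚ))) :
    IsElemAtom (↑G₀ : Set (Fin r → ℤ)) (Wmul Pp wz) := by
  classical
  set W := Wmul Pp wz with hW
  set wc : ↥Pp → ℚ := fun i => (wz i : ℚ) with hwc
  have hconstraint : ∀ i : ↥Pp, wz i < 0 → -(i : Fin r → ℤ) ∈ G₀ := by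
    intro i hi
    exact helem.1.2 i (show ((wz i : ℤ) : ℚ) < 0 by exact_mod_cast hi)
  have hmemG : ∀ g ∈ W, g ∈ G₀ := h.Wmul_memG hconstraint
  have hmemG' : ∀ g ∈ W, g ∈ (↑G₀ : Set (Fin r → ℤ)) := fun g hg => Finset.mem_coe.mpr (hmemG g hg)
  have hsum0 : W.sum = 0 := h.Wmul_sum hconstraint helem.1.1
  have hvecW : vec Pp W = wc := h.vec_Wmul wz
  have hWne : W ≠ 0 := by
    intro hc
    rw [hc, vec_zero] at hvecW
    exact helem.2.1 hvecW.symm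
  -- minimality: any nonzero zero-sum subsequence is all of W
  have hmin : ∀ T : Multiset (Fin r → ℤ), T ≤ W → T ≠ 0 → T.sum = 0 → T = W := by
    intro T hle hTne hTsum
    have hTG : ∀ g ∈ T, g ∈ G₀ := fun g hg => hmemG g (Multiset.mem_of_le hle hg)
    have hcle : ∀ g, T.count g ≤ W.count g := Multiset.le_iff_count.mp hle
    have hker : Mmap Pp (vec Pp T) = 0 := by
      rw [h.Mmap_vec T hTG, hTsum, ratc_zero]
    have hsub : suppV (vec Pp T) ⊆ suppV wc := by
      intro i hi
      rw [mem_suppV] at hi ⊢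
      intro hwi
      apply hi
      have hwzi : wz i = 0 := by
        have h' : ((wz i : ℤ) : ℚ) = 0 := hwi
        exact_mod_cast h'
      have h1 : T.count (i : Fin r → ℤ) = 0 := by
        have := hcle (i : Fin r → ℤ)
        rw [h.Wmul_count_pos wz i, hwzi] at this
        omega
      have h2 : T.count (-(i : Fin r → ℤ)) = 0 := by
        have := hcle (-(i : Fin r → ℤ))
        rw [h.Wmul_count_neg wz i, hwzi] at this
        omega
      simp [vec, h1, h2]
    obtain ⟨c, hc⟩ := helem.2.2 (vec Pp T) hker hsub
    -- find a coordinate where T is nonzero, get sign and size info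
    obtain ⟨g, hg⟩ := Multiset.exists_mem_of_ne_zero hTne
    have hgW : g ∈ W := Multiset.mem_of_le hle hg
    obtain ⟨j, hj⟩ := Wmul_mem (hW ▸ hgW)
    have hTj : ∀ i : ↥Pp, T.count (-(i : Fin r → ℤ)) ≤ (-wz i).toNat ∧
        T.count (i : Fin r → ℤ) ≤ (wz i).toNat := by
      intro i
      constructor
      · have := hcle (-(i : Fin r → ℤ)); rwa [h.Wmul_count_neg wz i] at this
      · have := hcle (i : Fin r → ℤ); rwa [h.Wmul_count_pos wz i] at this
    -- establish 0 < c ≤ 1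
    have hcj := congrFun hc j
    have hkey : (0 < c ∧ c ≤ 1) := by
      rcases hj with ⟨rfl, hjpos⟩ | ⟨rfl, hjneg⟩
      · have hcount : 0 < T.count ((j : Fin r → ℤ)) := Multiset.count_pos.mpr hg
        have hneg0 : T.count (-(j : Fin r → ℤ)) = 0 := by
          have := (hTj j).1
          omega
        have hvTj : vec Pp T j = (T.count (j : Fin r → ℤ) : ℚ) := by
          rw [vec, hneg0]; simp
        have hle1 : (T.count (j : Fin r → ℤ) : ℚ) ≤ (wz j : ℚ) := by
          have := (hTj j).2
          have h2 : (T.count (j : Fin r → ℤ) : ℤ) ≤ wz j := by omega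
          exact_mod_cast h2
        have hge1 : (1 : ℚ) ≤ (T.count (j : Fin r → ℤ) : ℚ) := by
          exact_mod_cast hcount
        rw [hvTj] at hcj
        have hwzj : (0 : ℚ) < (wz j : ℚ) := by exact_mod_cast hjpos
        simp only [Pi.smul_apply, smul_eq_mul, hwc] at hcj
        constructor
        · nlinarith
        · nlinarith
      · have hcount : 0 < T.count (-(j : Fin r → ℤ)) := Multiset.count_pos.mpr hg
        have hpos0 : T.count (j : Fin r → ℤ) = 0 := by
          have := (hTj j).2
          omega
        have hvTj : vec Pp T j = -(T.count (-(j : Fin r → ℤ)) : ℚ) := by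
          rw [vec, hpos0]; simp
        have hle1 : (T.count (-(j : Fin r → ℤ)) : ℚ) ≤ -(wz j : ℚ) := by
          have := (hTj j).1
          have h2 : (T.count (-(j : Fin r → ℤ)) : ℤ) ≤ -wz j := by omega
          exact_mod_cast h2
        have hge1 : (1 : ℚ) ≤ (T.count (-(j : Fin r → ℤ)) : ℚ) := by
          exact_mod_cast hcount
        rw [hvTj] at hcj
        have hwzj : (wz j : ℚ) < 0 := by exact_mod_cast hjneg
        simp only [Pi.smul_apply, smul_eq_mul, hwc] at hcj
        constructor
        · nlinarith
        · nlinarith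
    -- c is an integer: its denominator divides every wz i, hence the gcd 1
    have hden : ∀ i : ↥Pp, (c.den : ℤ) ∣ wz i := by
      intro i
      set mz : ℤ := (T.count (i : Fin r → ℤ) : ℤ) - (T.count (-(i : Fin r → ℤ)) : ℤ) with hmz
      have hci := congrFun hc i
      have hmzq : (mz : ℚ) = c * (wz i : ℚ) := by
        rw [hmz]
        push_cast
        rw [show ((T.count (i : Fin r → ℤ)):ℚ) - ((T.count (-(i : Fin r → ℤ))):ℚ) = vec Pp T i from rfl, hci]
        simp [hwc]
      have hint : c.num * wz i = (c.den : ℤ) * mz := by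
        have hq : ((c.num * wz i : ℤ) : ℚ) = (((c.den : ℤ) * mz : ℤ) : ℚ) := by
          push_cast
          rw [hmzq]
          have hd : (c.den : ℚ) ≠ 0 := Nat.cast_ne_zero.mpr c.den_nz
          rw [show (c.num : ℚ) = c * (c.den : ℚ) from
            ((eq_div_iff hd).mp (Rat.num_div_den c).symm).symm]
          ring
        exact_mod_cast hq
      have hcop : IsCoprime (c.den : ℤ) c.num := by
        have h1 : Int.gcd (c.den : ℤ) c.num = Nat.gcd c.den c.num.natAbs := by
          simp [Int.gcd]
        rw [Int.isCoprime_iff_gcd_eq_one, h1]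
        exact Nat.Coprime.symm c.reduced
      exact hcop.dvd_of_dvd_mul_left ⟨mz, hint⟩
    have hdg : (c.den : ℤ) ∣ 1 := hgcd ▸ Finset.dvd_gcd (fun i _ => hden i)
    have hden1 : c.den = 1 := by
      have := Int.le_of_dvd one_pos hdg
      have := c.pos
      omega
    have hc1 : c = 1 := by
      have hcnum : (c.num : ℚ) = c := by
        rw [← Rat.num_div_den c, hden1]; simp
      have h1 : 0 < c.num := by
        have := hkey.1
        rw [← hcnum] at this
        exact_mod_cast this
      have h2 : c.num ≤ 1 := by
        have := hkey.2
        rw [← hcnum] at this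
        exact_mod_cast this
      have : c.num = 1 := by omega
      rw [← hcnum, this]; simp
    rw [hc1, one_smul] at hc
    -- now vec T = wc, deduce count equality
    apply Multiset.ext.mpr
    intro a
    by_cases haW : a ∈ W
    · obtain ⟨i, hi⟩ := Wmul_mem (hW ▸ haW)
      have hvi := congrFun hc i
      rcases hi with ⟨rfl, hipos⟩ | ⟨rfl, hineg⟩
      · have hneg0 : T.count (-(i : Fin r → ℤ)) = 0 := by
          have := (hTj i).1; omega
        have : (T.count (i : Fin r → ℤ) : ℚ) = (wz i : ℚ) := by
          rw [vec, hneg0] at hvi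
          simpa [hwc] using hvi
        have hTc : (T.count (i : Fin r → ℤ) : ℤ) = wz i := by exact_mod_cast this
        rw [h.Wmul_count_pos wz i]
        omega
      · have hpos0 : T.count (i : Fin r → ℤ) = 0 := by
          have := (hTj i).2; omega
        have : (0 : ℚ) - (T.count (-(i : Fin r → ℤ)) : ℚ) = (wz i : ℚ) := by
          rw [vec, hpos0] at hvi
          simpa [hwc] using hvi
        have hTc : (T.count (-(i : Fin r → ℤ)) : ℤ) = -wz i := by
          have : ((T.count (-(i : Fin r → ℤ))) : ℚ) = -(wz i : ℚ) := by linarith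
          exact_mod_cast this
        rw [h.Wmul_count_neg wz i]
        omega
    · have hWa : W.count a = 0 := Multiset.count_eq_zero_of_notMem haW
      have := hcle a
      omega
  refine ⟨⟨⟨hmemG', hsum0⟩, hWne, hmin⟩, ⟨hmemG', hsum0⟩, ?_, ?_⟩
  · rw [h.ss_nonempty_iff hmemG, hvecW]
    exact helem.2.1
  · intro T hT hTss hTsub
    have hTG : ∀ g ∈ T, g ∈ G₀ := fun g hg => Finset.mem_coe.mp (hT.1 g hg)
    have hTv : vec Pp T ≠ 0 := (h.ss_nonempty_iff hTG).mp hTss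
    have hsub : suppV (vec Pp T) ⊆ suppV (vec Pp W) :=
      (h.ss_subset_iff hmemG hTG).mp hTsub
    have hker : Mmap Pp (vec Pp T) = 0 := by
      rw [h.Mmap_vec T hTG, hT.2, ratc_zero]
    obtain ⟨c, hceq⟩ := helem.2.2 (vec Pp T) hker (by rwa [hvecW] at hsub)
    have hcne : c ≠ 0 := by
      intro hc0
      rw [hc0, zero_smul] at hceq
      exact hTv hceq
    apply h.ss_eq_of_suppV_eq hmemG hTG
    rw [hvecW, hceq]
    ext i
    simp [mem_suppV, hcne]

end ElemAtom

section Atoms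

variable {G : Set (Fin r → ℤ)}

lemma atom_zero_notmem {U : Multiset (Fin r → ℤ)} (hU : IsAtomSeq G U)
    (hcard : 2 ≤ Multiset.card U) : (0 : Fin r → ℤ) ∉ U := by
  intro h0
  have hle : ({(0 : Fin r → ℤ)} : Multiset (Fin r → ℤ)) ≤ U := Multiset.singleton_le.mpr h0
  have := hU.2.2 _ hle (by simp) (by simp)
  rw [← this] at hcard
  simp at hcard

lemma atom_no_pair {U : Multiset (Fin r → ℤ)} (hU : IsAtomSeq G U)
    (hcard : 3 ≤ Multiset.card U) : ∀ g ∈ U, -g ∉ U := by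
  intro g hg hng
  have h0 : (0 : Fin r → ℤ) ∉ U := atom_zero_notmem hU (by omega)
  have hgne : g ≠ 0 := fun hc => h0 (hc ▸ hg)
  have hne2 : g ≠ -g := by
    intro hc
    apply hgne
    funext i
    simp only [Pi.zero_apply]
    have h2 := congrFun hc i
    simp only [Pi.neg_apply] at h2
    omega
  have hle : (g ::ₘ {-g} : Multiset (Fin r → ℤ)) ≤ U := by
    rw [Multiset.le_iff_count]
    intro a
    by_cases hag : a = g
    · subst hag
      rw [Multiset.count_cons_self]
      have : Multiset.count a ({-a} : Multiset (Fin r → ℤ)) = 0 := by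
        rw [Multiset.count_singleton]
        simp [hne2]
      rw [this]
      exact Multiset.one_le_count_iff_mem.mpr hg
    · rw [Multiset.count_cons_of_ne hag]
      by_cases hang : a = -g
      · subst hang
        rw [Multiset.count_singleton]
        simp only [if_pos rfl]
        exact Multiset.one_le_count_iff_mem.mpr hng
      · rw [Multiset.count_singleton, if_neg hang]
        exact Nat.zero_le _
  have := hU.2.2 _ hle (by simp) (by simp)
  rw [← this] at hcard
  simp at hcard

end Atoms

end Stmt4Aux


open Stmt4Aux in
/-- `D(G₀) ≤ max {2, (|G₀⁺| − rk⟨G₀⟩) · D^elm(G₀)}`, for a finite `G₀ ⊆ ℤ^r` (not contained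
in `{0}`) with a fixed admissible partition `G₀ ∖ {0} = G₀⁺ ∪ G₀⁻`. The rank of the subgroup
generated by `G₀` is expressed as the dimension of the `ℚ`-span of `G₀` in `ℚ^r`. -/
theorem stmt4 {r : ℕ} (G₀ Pp Pm : Finset (Fin r → ℤ))
    (hne : ∃ g ∈ G₀, g ≠ (0 : Fin r → ℤ))
    (hpart : (↑Pp ∪ ↑Pm : Set (Fin r → ℤ)) = (↑G₀ : Set (Fin r → ℤ)) \ {0})
    (hdisj : Disjoint Pp Pm)
    (hp : ∀ g ∈ Pp, -g ∉ Pp) (hm : ∀ g ∈ Pm, -g ∉ Pm)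
    (hmax : ∀ g ∈ Pm, -g ∈ Pp) :
    Davenport (↑G₀ : Set (Fin r → ℤ)) ≤
      max 2
        (((Pp.card -
            Module.finrank ℚ (Submodule.span ℚ
              ((fun g : Fin r → ℤ => fun i => (g i : ℚ)) '' (↑G₀ : Set (Fin r → ℤ)))) : ℕ) :
              ℕ∞) *
          DavenportElem (↑G₀ : Set (Fin r → ℤ))) := by
  classical
  have st : Setup G₀ Pp Pm := by
    refine ⟨?_, hdisj, hp, hm, hmax⟩
    intro x
    have hx := Set.ext_iff.mp hpart x
    simp only [Set.mem_union, Finset.mem_coe, Set.mem_diff, Set.mem_singleton_iff] at hx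
    exact hx
  set D₀ : ℕ := Pp.card - Module.finrank ℚ (Submodule.span ℚ
      ((fun g : Fin r → ℤ => fun i => (g i : ℚ)) '' (↑G₀ : Set (Fin r → ℤ)))) with hD₀
  rw [Davenport]
  refine iSup₂_le ?_
  intro U hU
  have hUatom : IsAtomSeq (↑G₀ : Set (Fin r → ℤ)) U := hU
  by_cases hsmall : Multiset.card U ≤ 2
  · refine le_trans ?_ (le_max_left _ _)
    exact_mod_cast hsmall
  push_neg at hsmall
  refine le_trans ?_ (le_max_right _ _)
  have hUG : ∀ g ∈ U, g ∈ G₀ := fun g hg => Finset.mem_coe.mp (hUatom.1.1 g hg)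
  have h0U : (0 : Fin r → ℤ) ∉ U := atom_zero_notmem hUatom hsmall.le
  have hnp : ∀ g ∈ U, -g ∉ U := atom_no_pair hUatom hsmall
  set v := vec Pp U with hv
  have hInC : InC G₀ Pp v := st.vec_inC hUG hUatom.1.2
  have hv0 : v ≠ 0 := by
    obtain ⟨g, hg⟩ := Multiset.exists_mem_of_ne_zero hUatom.2.1
    have hgG : g ∈ G₀ := hUG g hg
    intro hc
    rcases st.cases_mem g hgG with rfl | hP | hM
    · exact h0U hg
    · have hzero := congrFun hc ⟨g, hP⟩
      rw [hv, vec] at hzero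
      simp only [Pi.zero_apply] at hzero
      rw [Multiset.count_eq_zero_of_notMem (hnp g hg)] at hzero
      have h2 : U.count g = 0 := by
        have h1 : (Multiset.count g U : ℚ) = 0 := by push_cast at hzero; linarith
        exact_mod_cast h1
      exact absurd h2 (Multiset.count_pos.mpr hg).ne'
    · have hzero := congrFun hc ⟨-g, hmax g hM⟩
      rw [hv, vec] at hzero
      simp only [Pi.zero_apply, neg_neg] at hzero
      rw [Multiset.count_eq_zero_of_notMem (hnp g hg)] at hzero
      have h2 : U.count g = 0 := by
        have h1 : (Multiset.count g U : ℚ) = 0 := by push_cast at hzero; linarith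
        exact_mod_cast h1
      exact absurd h2 (Multiset.count_pos.mpr hg).ne'
  obtain ⟨k, lam, w, hlam, helem, hconf, hsumv⟩ :=
    decomp (G₀ := G₀) (suppV v).card v le_rfl hInC
  obtain ⟨s', lam', hsub', hlam', hsum', hlin⟩ :=
    carath (Finset.univ.card) w Finset.univ lam le_rfl (fun i _ => hlam i)
  have hveq : v = ∑ i ∈ s', lam' i • w i := by rw [hsum']; exact hsumv
  have hs'ne : s'.Nonempty := by
    rcases Finset.eq_empty_or_nonempty s' with rfl | hne'
    · exfalso; apply hv0; rw [hveq]; simp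
    · exact hne'
  have hkerw : ∀ i ∈ s', Mmap Pp (w i) = 0 := fun i _ => (helem i).1.1
  have hcardle : s'.card ≤ D₀ := st.dim_bound w s' hkerw hlin
  have hD₀pos : 1 ≤ D₀ := le_trans (Finset.card_pos.mpr hs'ne) hcardle
  choose wz c hcpos hceq hgcd using fun i : Fin k => scale ((helem i).2.1)
  set wc : Fin k → ↥Pp → ℚ := fun i => (fun j => ((wz i j : ℤ) : ℚ)) with hwc
  have hwceq : ∀ i, wc i = c i • w i := fun i => hceq i
  have helem' : ∀ i, ElemV G₀ Pp (wc i) := by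
    intro i
    rw [hwceq i]
    exact ElemV.smul (helem i) (hcpos i)
  have hconf' : ∀ i, Conf (wc i) v := by
    intro i
    rw [hwceq i]
    exact Conf.smul (hconf i) (hcpos i).le
  set mu : Fin k → ℚ := fun i => lam' i / c i with hmu
  have hmupos : ∀ i ∈ s', 0 < mu i := fun i hi => div_pos (hlam' i hi) (hcpos i)
  have hveq' : v = ∑ i ∈ s', mu i • wc i := by
    rw [hveq]
    refine Finset.sum_congr rfl fun i _ => ?_
    rw [hwceq i, smul_smul, hmu]
    dsimp only
    rw [div_mul_cancel₀ _ (hcpos i).ne']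
  set Wm : Fin k → Multiset (Fin r → ℤ) := fun i => Wmul Pp (wz i) with hWm
  have hWelem : ∀ i, IsElemAtom (↑G₀ : Set (Fin r → ℤ)) (Wm i) := fun i =>
    st.Wmul_elemAtom (hgcd i) (helem' i)
  have hWcard : ∀ i, (Multiset.card (Wm i) : ℚ) = ∑ j : ↥Pp, |wc i j| := fun i =>
    st.card_Wmul (wz i)
  have hWvec : ∀ i, vec Pp (Wm i) = wc i := fun i => st.vec_Wmul (wz i)
  have hWne : ∀ i, Wm i ≠ 0 := by
    intro i hc
    apply (helem' i).2.1
    rw [← hWvec i, hc, vec_zero]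
  have hDE : ∀ i, (Multiset.card (Wm i) : ℕ∞) ≤ DavenportElem (↑G₀ : Set (Fin r → ℤ)) := by
    intro i
    exact le_iSup₂ (f := fun (T : Multiset (Fin r → ℤ))
      (_ : T ∈ {T : Multiset (Fin r → ℤ) | IsElemAtom (↑G₀ : Set (Fin r → ℤ)) T}) =>
      (Multiset.card T : ℕ∞)) (Wm i) (hWelem i)
  have hvapp : ∀ j : ↥Pp, v j = ∑ i ∈ s', mu i * wc i j := by
    intro j
    have := congrFun hveq' j
    rwa [Finset.sum_apply] at this
  by_cases hone : ∃ i ∈ s', 1 ≤ mu i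
  · -- some coefficient at least 1: U is itself an elementary atom
    obtain ⟨i, his, hmi⟩ := hone
    have hle : Wm i ≤ U := by
      rw [Multiset.le_iff_count]
      intro a
      by_cases haW : a ∈ Wm i
      · obtain ⟨j, hj⟩ := Wmul_mem haW
        rcases hj with ⟨rfl, hjpos⟩ | ⟨rfl, hjneg⟩
        · have hwcpos : (0 : ℚ) < wc i j := by
            show (0 : ℚ) < ((wz i j : ℤ) : ℚ)
            exact_mod_cast hjpos
          have hvj : (0 : ℚ) < v j := by
            by_contra hcle'
            push_neg at hcle'
            exact absurd ((hconf' i j).2 hcle') (not_le.mpr hwcpos)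
          have hterm : (wz i j : ℚ) ≤ v j := by
            rw [hvapp j]
            have hsingle : mu i * wc i j ≤ ∑ l ∈ s', mu l * wc l j := by
              refine Finset.single_le_sum (f := fun l => mu l * wc l j) (fun l hl => ?_) his
              have h1 := (hmupos l hl).le
              have h2 : 0 ≤ wc l j := (hconf' l j).1 hvj.le
              positivity
            have : (wz i j : ℚ) ≤ mu i * wc i j := by
              have : wc i j = (wz i j : ℚ) := rfl
              nlinarith
            linarith
          have hcnt : U.count (-(j : Fin r → ℤ)) = 0 := by
            by_contra hcnt'
            have hmem : -(j : Fin r → ℤ) ∈ U :=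
              Multiset.count_pos.mp (Nat.pos_of_ne_zero hcnt')
            have hnotj := hnp _ hmem
            rw [neg_neg] at hnotj
            have hc0 : U.count (j : Fin r → ℤ) = 0 := Multiset.count_eq_zero_of_notMem hnotj
            rw [hv, vec, hc0] at hvj
            push_cast at hvj
            have hnn : (0:ℚ) ≤ (Multiset.count (-(j : Fin r → ℤ)) U : ℚ) := Nat.cast_nonneg _
            linarith
          have hveqc : v j = (U.count (j : Fin r → ℤ) : ℚ) := by
            rw [hv, vec, hcnt]; simp
          have hfin : (wz i j : ℚ) ≤ (U.count (j : Fin r → ℤ) : ℚ) := by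
            rw [← hveqc]; exact hterm
          rw [hWm]
          show (Wmul Pp (wz i)).count ((j : Fin r → ℤ)) ≤ _
          rw [st.Wmul_count_pos (wz i) j]
          have : ((wz i j).toNat : ℤ) ≤ (U.count (j : Fin r → ℤ) : ℤ) := by
            have h2 : (wz i j : ℚ) ≤ ((U.count (j : Fin r → ℤ) : ℤ) : ℚ) := by
              exact_mod_cast hfin
            have h3 : wz i j ≤ (U.count (j : Fin r → ℤ) : ℤ) := by exact_mod_cast h2
            rw [Int.toNat_of_nonneg hjpos.le]
            exact h3
          exact_mod_cast this
        · have hwcneg : wc i j < (0 : ℚ) := by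
            show ((wz i j : ℤ) : ℚ) < (0 : ℚ)
            exact_mod_cast hjneg
          have hvj : v j < (0 : ℚ) := by
            by_contra hcle'
            push_neg at hcle'
            exact absurd ((hconf' i j).1 hcle') (not_le.mpr hwcneg)
          have hterm : v j ≤ (wz i j : ℚ) := by
            rw [hvapp j]
            have hsingle : mu i * -wc i j ≤ ∑ l ∈ s', mu l * -wc l j := by
              refine Finset.single_le_sum (f := fun l => mu l * -wc l j) (fun l hl => ?_) his
              show 0 ≤ mu l * -wc l j
              have h1 := (hmupos l hl).le
              have h2 : wc l j ≤ 0 := (hconf' l j).2 hvj.le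
              nlinarith
            have hflip : ∑ l ∈ s', mu l * -wc l j = -∑ l ∈ s', mu l * wc l j := by
              rw [← Finset.sum_neg_distrib]
              exact Finset.sum_congr rfl fun l _ => by ring
            have h3 : wc i j = (wz i j : ℚ) := rfl
            nlinarith [hsingle, hflip]
          have hcnt : U.count ((j : Fin r → ℤ)) = 0 := by
            by_contra hcnt'
            have hmem : (j : Fin r → ℤ) ∈ U :=
              Multiset.count_pos.mp (Nat.pos_of_ne_zero hcnt')
            have h2 := Multiset.count_eq_zero_of_notMem (hnp _ hmem)
            rw [hv, vec, h2] at hvj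
            push_cast at hvj
            have hnn : (0:ℚ) ≤ (Multiset.count ((j : Fin r → ℤ)) U : ℚ) := Nat.cast_nonneg _
            linarith
          have hveqc : v j = -(U.count (-(j : Fin r → ℤ)) : ℚ) := by
            rw [hv, vec, hcnt]; simp
          have hfin : (-(wz i j) : ℚ) ≤ (U.count (-(j : Fin r → ℤ)) : ℚ) := by
            rw [hveqc] at hterm
            push_cast at hterm ⊢
            linarith
          rw [hWm]
          show (Wmul Pp (wz i)).count (-(j : Fin r → ℤ)) ≤ _
          rw [st.Wmul_count_neg (wz i) j]
          have : ((-wz i j).toNat : ℤ) ≤ (U.count (-(j : Fin r → ℤ)) : ℤ) := by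
            have h2 : ((-(wz i j) : ℤ) : ℚ) ≤ ((U.count (-(j : Fin r → ℤ)) : ℤ) : ℚ) := by
              push_cast
              push_cast at hfin
              linarith
            have h3 : -wz i j ≤ (U.count (-(j : Fin r → ℤ)) : ℤ) := by exact_mod_cast h2
            rw [Int.toNat_of_nonneg (neg_nonneg.mpr hjneg.le)]
            exact h3
          exact_mod_cast this
      · rw [Multiset.count_eq_zero_of_notMem haW]
        exact Nat.zero_le _
    have hUW : Wm i = U := hUatom.2.2 _ hle (hWne i) (hWelem i).1.1.2
    calc (Multiset.card U : ℕ∞) = (Multiset.card (Wm i) : ℕ∞) := by rw [hUW]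
      _ ≤ DavenportElem (↑G₀ : Set (Fin r → ℤ)) := hDE i
      _ = 1 * DavenportElem (↑G₀ : Set (Fin r → ℤ)) := (one_mul _).symm
      _ ≤ (D₀ : ℕ∞) * DavenportElem (↑G₀ : Set (Fin r → ℤ)) := by
          refine mul_le_mul_left ?_ _
          exact_mod_cast hD₀pos
  · push_neg at hone
    have habs : ∀ j : ↥Pp, |v j| = ∑ i ∈ s', mu i * |wc i j| := by
      intro j
      rcases le_or_gt 0 (v j) with hpos | hneg
      · rw [abs_of_nonneg hpos, hvapp j]
        refine Finset.sum_congr rfl fun i hi => ?_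
        rw [abs_of_nonneg ((hconf' i j).1 hpos)]
      · rw [abs_of_neg hneg, hvapp j, ← Finset.sum_neg_distrib]
        refine Finset.sum_congr rfl fun i hi => ?_
        rw [abs_of_nonpos ((hconf' i j).2 hneg.le)]
        ring
    have hcardq : (Multiset.card U : ℚ) = ∑ i ∈ s', mu i * (Multiset.card (Wm i) : ℚ) := by
      rw [st.card_eq_l1 U hUG h0U hnp]
      simp_rw [← hv, habs]
      rw [Finset.sum_comm]
      refine Finset.sum_congr rfl fun i _ => ?_
      rw [hWcard i, Finset.mul_sum]
    have hlt : (Multiset.card U : ℚ) < ∑ i ∈ s', (Multiset.card (Wm i) : ℚ) := by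
      rw [hcardq]
      refine Finset.sum_lt_sum_of_nonempty hs'ne fun i hi => ?_
      have hcpos' : (0 : ℚ) < (Multiset.card (Wm i) : ℚ) := by
        have := hWne i
        have hcard := Multiset.card_pos.mpr this
        exact_mod_cast hcard
      have h1 := hmupos i hi
      have h2 := hone i hi
      nlinarith
    have hnat : Multiset.card U < ∑ i ∈ s', Multiset.card (Wm i) := by
      have : (Multiset.card U : ℚ) < ((∑ i ∈ s', Multiset.card (Wm i) : ℕ) : ℚ) := by
        push_cast
        exact hlt
      exact_mod_cast this
    calc (Multiset.card U : ℕ∞) ≤ ((∑ i ∈ s', Multiset.card (Wm i) : ℕ) : ℕ∞) := by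
          exact_mod_cast hnat.le
      _ = ∑ i ∈ s', (Multiset.card (Wm i) : ℕ∞) := by push_cast; rfl
      _ ≤ ∑ _i ∈ s', DavenportElem (↑G₀ : Set (Fin r → ℤ)) :=
          Finset.sum_le_sum fun i _ => hDE i
      _ = s'.card • DavenportElem (↑G₀ : Set (Fin r → ℤ)) := Finset.sum_const _
      _ = (s'.card : ℕ∞) * DavenportElem (↑G₀ : Set (Fin r → ℤ)) := nsmul_eq_mul _ _
      _ ≤ (D₀ : ℕ∞) * DavenportElem (↑G₀ : Set (Fin r → ℤ)) := by
          refine mul_le_mul_left ?_ _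
          exact_mod_cast hcardle
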